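/- Let Γ be the subgroup of PSL₂(ℤ) generated by the images of the seven matrices B⁶, B⁻¹A³B, A³, B²A⁻¹B, BAB, AB², and B³A. Then the image of BAB³A⁻¹B⁻⁴ = [[205,-24],[504,-59]] in PSL₂(ℤ) lies in Γ̄(12) but does not lie in Γ; in particular Γ̄(12) is not contained in Γ. -/

import Mathlib

/-- `SL(2, ℤ)`. -/
abbrev SL2Z := Matrix.SpecialLinearGroup (Fin 2) ℤ

/-- `PSL₂(ℤ)`, the quotient of `SL(2, ℤ)` by its center `{±I}`. -/
abbrev PSL2Z := SL2Z ⧸ Subgroup.center SL2Z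

/-- The projection `SL(2, ℤ) → PSL₂(ℤ)`. -/
def projSL : SL2Z →* PSL2Z := QuotientGroup.mk' (Subgroup.center SL2Z)

/-- `Γ̄(N)`, the image of the principal congruence subgroup `Γ(N)` in `PSL₂(ℤ)`. -/
def GammaBar (N : ℕ) : Subgroup PSL2Z := (CongruenceSubgroup.Gamma N).map projSL

/-- The matrix `A = [[1,2],[0,1]]` in `SL(2, ℤ)`. -/
def matA : SL2Z := ⟨!![1, 2; 0, 1], by norm_num [Matrix.det_fin_two_of]⟩

/-- The matrix `B = [[1,0],[2,1]]` in `SL(2, ℤ)`. -/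
def matB : SL2Z := ⟨!![1, 0; 2, 1], by norm_num [Matrix.det_fin_two_of]⟩

/-- The matrix `T = [[1,1],[0,1]]` in `SL(2, ℤ)`. -/
def matT : SL2Z := ⟨!![1, 1; 0, 1], by norm_num [Matrix.det_fin_two_of]⟩

/-- The matrix `L = [[1,0],[1,1]]` in `SL(2, ℤ)`. -/
def matL : SL2Z := ⟨!![1, 0; 1, 1], by norm_num [Matrix.det_fin_two_of]⟩

/-- `Ā`, the image of `A` in `PSL₂(ℤ)`. -/
def Abar : PSL2Z := projSL matA

/-- `B̄`, the image of `B` in `PSL₂(ℤ)`. -/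
def Bbar : PSL2Z := projSL matB


/-- Key irrationality preservation for integral Möbius action on slopes. -/
lemma key_irr (a b c d : ℤ) (hdet : a * d - b * c = 1) (x y : ℝ)
    (h : Irrational (x / y)) :
    Irrational ((a * x + b * y) / (c * x + d * y)) := by
  have hy : y ≠ 0 := by
    rintro rfl
    simp only [div_zero] at h
    exact (Rat.not_irrational 0) (by simpa using h)
  set t : ℝ := x / y with ht
  have hx : x = t * y := by rw [ht, div_mul_cancel₀ _ hy]
  have hcd : (c : ℝ) * t + d ≠ 0 := by
    intro h0
    rcases eq_or_ne (c : ℝ) 0 with hc | hc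
    · have hc' : c = 0 := by exact_mod_cast hc
      have hd : (d : ℝ) = 0 := by rw [hc, zero_mul, zero_add] at h0; exact h0
      have hd' : d = 0 := by exact_mod_cast hd
      rw [hc', hd'] at hdet; simp at hdet
    · have hcz : c ≠ 0 := by exact_mod_cast hc
      have : t = ((-d / c : ℚ) : ℝ) := by
        push_cast
        field_simp at h0 ⊢
        linarith
      exact h.ne_rat _ this
  have hden : c * x + d * y = y * ((c : ℝ) * t + d) := by rw [hx]; ring
  have hnum : a * x + b * y = y * ((a : ℝ) * t + b) := by rw [hx]; ring
  have hratio : (a * x + b * y) / (c * x + d * y) = ((a : ℝ) * t + b) / ((c : ℝ) * t + d) := by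
    rw [hden, hnum, mul_div_mul_left _ _ hy]
  rw [hratio]
  rintro ⟨q, hq⟩
  have hqe : (a : ℝ) * t + b = q * ((c : ℝ) * t + d) := by
    rw [hq, div_mul_cancel₀ _ hcd]
  rcases eq_or_ne ((a : ℝ) - q * c) 0 with hz | hz
  · -- then det = 0
    have ha : (a : ℝ) = q * c := by linarith
    have hb : (b : ℝ) = q * d := by linear_combination hqe - t * ha
    have hdd : ((a : ℝ) * d - b * c) = 0 := by rw [ha, hb]; ring
    have hd2 : ((a : ℝ) * d - b * c) = 1 := by exact_mod_cast hdet
    linarith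
  · have hteq : t = ((q * d - b) / (a - q * c) : ℚ) := by
      have h2 : t * ((a : ℝ) - q * c) = q * d - b := by linear_combination hqe
      have hz' : ((a : ℚ) - q * c) ≠ 0 := by
        intro hh
        apply hz
        have : (((a : ℚ) - q * c : ℚ) : ℝ) = 0 := by rw [hh]; norm_num
        push_cast at this
        linarith
      push_cast
      rw [eq_div_iff (by push_cast at hz ⊢; convert hz using 2 <;> norm_num)]
      push_cast at h2 ⊢
      linarith
    exact h ⟨_, hteq.symm⟩

/-- Vectors in `ℝ²` with irrational slope. -/
def IrrSlope : Type := {v : Fin 2 → ℝ // Irrational (v 0 / v 1)}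

namespace IrrSlope

noncomputable instance : MulAction SL2Z IrrSlope where
  smul M v := ⟨(M.1.map (Int.cast : ℤ → ℝ)).mulVec v.1, by
    have h := key_irr (M.1 0 0) (M.1 0 1) (M.1 1 0) (M.1 1 1)
      (by have := M.2; rwa [Matrix.det_fin_two] at this) (v.1 0) (v.1 1) v.2
    convert h using 2 <;>
      simp [Matrix.mulVec, dotProduct, Fin.sum_univ_two, Matrix.map_apply]⟩
  one_smul v := Subtype.ext (by
    show ((1 : SL2Z).1.map _).mulVec v.1 = v.1
    simp)
  mul_smul M N v := Subtype.ext (by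
    show ((M * N).1.map _).mulVec v.1 = (M.1.map _).mulVec ((N.1.map _).mulVec v.1)
    rw [Matrix.mulVec_mulVec, Matrix.SpecialLinearGroup.coe_mul]
    exact congrArg (fun m : Matrix (Fin 2) (Fin 2) ℝ => m.mulVec v.1)
      (Matrix.map_mul (L := M.1) (M := N.1) (f := Int.castRingHom ℝ)))

lemma smul_coe (M : SL2Z) (v : IrrSlope) (i : Fin 2) :
    (M • v).1 i = (M.1 i 0 : ℝ) * v.1 0 + (M.1 i 1 : ℝ) * v.1 1 := by
  show ((M.1.map (Int.cast : ℤ → ℝ)).mulVec v.1) i = _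
  simp [Matrix.mulVec, dotProduct, Fin.sum_univ_two, Matrix.map_apply]

/-- The slope of a vector. -/
noncomputable def sl (v : IrrSlope) : ℝ := v.1 0 / v.1 1

lemma snd_ne_zero (v : IrrSlope) : v.1 1 ≠ 0 := by
  intro h
  have := v.2
  rw [h, div_zero] at this
  exact Rat.not_irrational 0 (by simpa using this)

lemma fst_ne_zero (v : IrrSlope) : v.1 0 ≠ 0 := by
  intro h
  have := v.2
  rw [h, zero_div] at this
  exact Rat.not_irrational 0 (by simpa using this)

end IrrSlope

open IrrSlope in
noncomputable def vSqrt2 : IrrSlope :=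
  ⟨![Real.sqrt 2, 1], by simpa using irrational_sqrt_two⟩

open IrrSlope in
noncomputable def vSqrt2' : IrrSlope :=
  ⟨![1, Real.sqrt 2], by
    have : (1 : ℝ) / Real.sqrt 2 = (Real.sqrt 2)⁻¹ := one_div _
    simpa [this] using irrational_sqrt_two.inv⟩

lemma one_lt_sqrt_two : (1 : ℝ) < Real.sqrt 2 := by
  have : (1 : ℝ) = Real.sqrt 1 := by simp
  rw [this]
  exact Real.sqrt_lt_sqrt (by norm_num) (by norm_num)

lemma inv_gt_one_aux {t : ℝ} (ht : t ≠ 0) (h : 1 < t⁻¹) : 0 < t ∧ t < 1 := by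
  have h0 : 0 < t⁻¹ := by linarith
  have hp : 0 < t := inv_pos.mp h0
  exact ⟨hp, by nlinarith [mul_inv_cancel₀ ht]⟩

lemma inv_lt_neg_one_aux {t : ℝ} (ht : t ≠ 0) (h : t⁻¹ < -1) : -1 < t ∧ t < 0 := by
  have h0 : t⁻¹ < 0 := by linarith
  have hn : t < 0 := inv_lt_zero.mp h0
  exact ⟨by nlinarith [mul_inv_cancel₀ ht], hn⟩

namespace IrrSlope

lemma sl_ne_zero (v : IrrSlope) : sl v ≠ 0 :=
  div_ne_zero (fst_ne_zero v) (snd_ne_zero v)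

lemma irrational_sl (v : IrrSlope) : Irrational (sl v) := v.2

def matAi : SL2Z := ⟨!![1, -2; 0, 1], by norm_num [Matrix.det_fin_two_of]⟩
def matBi : SL2Z := ⟨!![1, 0; -2, 1], by norm_num [Matrix.det_fin_two_of]⟩

lemma matA_inv : matA⁻¹ = matAi := by
  apply inv_eq_of_mul_eq_one_right
  ext i j
  fin_cases i <;> fin_cases j <;>
    decide

lemma matB_inv : matB⁻¹ = matBi := by
  apply inv_eq_of_mul_eq_one_right
  ext i j
  fin_cases i <;> fin_cases j <;>
    decide

lemma sl_A (v : IrrSlope) : sl (matA • v) = sl v + 2 := by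
  unfold sl
  rw [smul_coe, smul_coe]
  norm_num [matA]
  field_simp [snd_ne_zero v]
  try ring

lemma sl_Ai (v : IrrSlope) : sl (matAi • v) = sl v - 2 := by
  unfold sl
  rw [smul_coe, smul_coe]
  norm_num [matAi]
  field_simp [snd_ne_zero v]
  try ring

lemma sl_B (v : IrrSlope) : (sl (matB • v))⁻¹ = (sl v)⁻¹ + 2 := by
  unfold sl
  rw [smul_coe, smul_coe, inv_div, inv_div]
  norm_num [matB]
  field_simp [fst_ne_zero v]
  try ring

lemma sl_Bi (v : IrrSlope) : (sl (matBi • v))⁻¹ = (sl v)⁻¹ - 2 := by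
  unfold sl
  rw [smul_coe, smul_coe, inv_div, inv_div]
  norm_num [matBi]
  field_simp [fst_ne_zero v]
  try ring

end IrrSlope

open IrrSlope in
noncomputable def gens : Fin 2 → SL2Z := ![matA, matB]

open IrrSlope in
noncomputable def Xpp : Fin 2 → Set IrrSlope :=
  ![{v | 1 < sl v}, {v | 1 < (sl v)⁻¹}]

open IrrSlope in
noncomputable def Ypp : Fin 2 → Set IrrSlope :=
  ![{v | sl v < -1}, {v | (sl v)⁻¹ < -1}]

open IrrSlope in
lemma mem_Xpp0 (v : IrrSlope) : v ∈ Xpp 0 ↔ 1 < sl v := Iff.rfl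
open IrrSlope in
lemma mem_Xpp1 (v : IrrSlope) : v ∈ Xpp 1 ↔ 1 < (sl v)⁻¹ := Iff.rfl
open IrrSlope in
lemma mem_Ypp0 (v : IrrSlope) : v ∈ Ypp 0 ↔ sl v < -1 := Iff.rfl
open IrrSlope in
lemma mem_Ypp1 (v : IrrSlope) : v ∈ Ypp 1 ↔ (sl v)⁻¹ < -1 := Iff.rfl

open IrrSlope in
lemma fin2_cases (i : Fin 2) : i = 0 ∨ i = 1 := by omega

open IrrSlope in
lemma phi_injective : Function.Injective (FreeGroup.lift gens) := by
  apply FreeGroup.injective_lift_of_ping_pong gens Xpp Ypp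
  · -- nonempty
    intro i
    rcases fin2_cases i with rfl | rfl
    · refine ⟨vSqrt2, (mem_Xpp0 _).2 ?_⟩
      show (1:ℝ) < (![Real.sqrt 2, (1:ℝ)] 0) / (![Real.sqrt 2, (1:ℝ)] 1)
      simpa using one_lt_sqrt_two
    · refine ⟨vSqrt2', (mem_Xpp1 _).2 ?_⟩
      show (1:ℝ) < ((![(1:ℝ), Real.sqrt 2] 0) / (![(1:ℝ), Real.sqrt 2] 1))⁻¹
      rw [show ((![(1:ℝ), Real.sqrt 2] 0) / (![(1:ℝ), Real.sqrt 2] 1)) = (Real.sqrt 2)⁻¹ by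
        simp [one_div]]
      rw [inv_inv]
      exact one_lt_sqrt_two
  · -- X pairwise disjoint
    intro i j hij
    have hd : Disjoint (Xpp 0) (Xpp 1) := by
      rw [Set.disjoint_left]
      intro v hv hv'
      rw [mem_Xpp0] at hv; rw [mem_Xpp1] at hv'
      rcases inv_gt_one_aux (sl_ne_zero v) hv' with ⟨h1, h2⟩
      linarith
    rcases fin2_cases i with rfl | rfl <;> rcases fin2_cases j with rfl | rfl
    · exact absurd rfl hij
    · exact hd
    · exact hd.symm
    · exact absurd rfl hij
  · -- Y pairwise disjoint
    intro i j hij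
    have hd : Disjoint (Ypp 0) (Ypp 1) := by
      rw [Set.disjoint_left]
      intro v hv hv'
      rw [mem_Ypp0] at hv; rw [mem_Ypp1] at hv'
      rcases inv_lt_neg_one_aux (sl_ne_zero v) hv' with ⟨h1, h2⟩
      linarith
    rcases fin2_cases i with rfl | rfl <;> rcases fin2_cases j with rfl | rfl
    · exact absurd rfl hij
    · exact hd
    · exact hd.symm
    · exact absurd rfl hij
  · -- X i disjoint Y j
    intro i j
    rcases fin2_cases i with rfl | rfl <;> rcases fin2_cases j with rfl | rfl <;>
      rw [Set.disjoint_left] <;> intro v hv hv'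
    · rw [mem_Xpp0] at hv; rw [mem_Ypp0] at hv'; linarith
    · rw [mem_Xpp0] at hv; rw [mem_Ypp1] at hv'
      rcases inv_lt_neg_one_aux (sl_ne_zero v) hv' with ⟨h1, h2⟩; linarith
    · rw [mem_Xpp1] at hv; rw [mem_Ypp0] at hv'
      rcases inv_gt_one_aux (sl_ne_zero v) hv with ⟨h1, h2⟩; linarith
    · rw [mem_Xpp1] at hv; rw [mem_Ypp1] at hv'
      rcases inv_gt_one_aux (sl_ne_zero v) hv with ⟨h1, h2⟩
      rcases inv_lt_neg_one_aux (sl_ne_zero v) hv' with ⟨h1', h2'⟩; linarith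
  · -- hX
    intro i
    rcases fin2_cases i with rfl | rfl <;> rintro w ⟨v, hv, rfl⟩
    · rw [Set.mem_compl_iff, mem_Ypp0, not_lt] at hv
      have hne : sl v ≠ -1 := by
        have := (irrational_sl v).ne_int (-1); simpa using this
      have hlt : -1 < sl v := lt_of_le_of_ne hv (Ne.symm hne)
      show gens 0 • v ∈ Xpp 0
      rw [mem_Xpp0, show gens 0 = matA from rfl, sl_A]
      linarith
    · rw [Set.mem_compl_iff, mem_Ypp1, not_lt] at hv
      have hne : (sl v)⁻¹ ≠ -1 := by
        have := ((irrational_sl v).inv).ne_int (-1); simpa using this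
      have hlt : -1 < (sl v)⁻¹ := lt_of_le_of_ne hv (Ne.symm hne)
      show gens 1 • v ∈ Xpp 1
      rw [mem_Xpp1, show gens 1 = matB from rfl, sl_B]
      linarith
  · -- hY
    intro i
    rcases fin2_cases i with rfl | rfl <;> rintro w ⟨v, hv, rfl⟩
    · rw [Set.mem_compl_iff, mem_Xpp0, not_lt] at hv
      have hne : sl v ≠ 1 := by
        have := (irrational_sl v).ne_int 1; simpa using this
      have hlt : sl v < 1 := lt_of_le_of_ne hv hne
      show gens⁻¹ 0 • v ∈ Ypp 0
      rw [mem_Ypp0, show gens⁻¹ 0 = matA⁻¹ from rfl, matA_inv, sl_Ai]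
      linarith
    · rw [Set.mem_compl_iff, mem_Xpp1, not_lt] at hv
      have hne : (sl v)⁻¹ ≠ 1 := by
        have := ((irrational_sl v).inv).ne_int 1; simpa using this
      have hlt : (sl v)⁻¹ < 1 := lt_of_le_of_ne hv hne
      show gens⁻¹ 1 • v ∈ Ypp 1
      rw [mem_Ypp1, show gens⁻¹ 1 = matB⁻¹ from rfl, matB_inv, sl_Bi]
      linarith

abbrev SL2Z4 := Matrix.SpecialLinearGroup (Fin 2) (ZMod 4)

def rho : SL2Z →* SL2Z4 := Matrix.SpecialLinearGroup.map (Int.castRingHom (ZMod 4))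

lemma zmod4_mul_helper : ∀ b c f g : ZMod 4, b * b = 0 → c * c = 0 → f * f = 0 → g * g = 0 →
    ((1 : ZMod 4) * 1 + b * g = 1 ∧ (1 * f + b * 1) * (1 * f + b * 1) = 0 ∧
      (c * 1 + 1 * g) * (c * 1 + 1 * g) = 0 ∧ c * f + 1 * 1 = 1) := by decide

/-- Matrices mod 4 congruent to the identity modulo 2, with diagonal ≡ 1 mod 4. -/
def Hmod4 : Subgroup SL2Z4 where
  carrier := {x | x.1 0 0 = 1 ∧ x.1 0 1 * x.1 0 1 = 0 ∧ x.1 1 0 * x.1 1 0 = 0 ∧ x.1 1 1 = 1}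
  one_mem' := by
    refine ⟨?_, ?_, ?_, ?_⟩ <;> simp
  mul_mem' := by
    rintro x y ⟨h1, h2, h3, h4⟩ ⟨h5, h6, h7, h8⟩
    have hmul : ∀ i j, (x * y).1 i j = x.1 i 0 * y.1 0 j + x.1 i 1 * y.1 1 j := by
      intro i j
      rw [Matrix.SpecialLinearGroup.coe_mul, Matrix.mul_apply, Fin.sum_univ_two]
    obtain ⟨k1, k2, k3, k4⟩ := zmod4_mul_helper (x.1 0 1) (x.1 1 0) (y.1 0 1) (y.1 1 0)
      h2 h3 h6 h7
    exact ⟨by rw [hmul, h1, h5]; exact k1, by rw [hmul, h1, h8]; exact k2,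
      by rw [hmul, h4, h5]; exact k3, by rw [hmul, h4, h8]; exact k4⟩
  inv_mem' := by
    rintro x ⟨h1, h2, h3, h4⟩
    rw [Matrix.SpecialLinearGroup.SL2_inv_expl]
    refine ⟨?_, ?_, ?_, ?_⟩
    · simpa using h4
    · show (-(x.1 0 1)) * (-(x.1 0 1)) = 0
      rw [neg_mul_neg]; exact h2
    · show (-(x.1 1 0)) * (-(x.1 1 0)) = 0
      rw [neg_mul_neg]; exact h3
    · simpa using h1

lemma rho_matA_mem : rho matA ∈ Hmod4 := by
  refine ⟨?_, ?_, ?_, ?_⟩ <;>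
    simp [rho, matA, Matrix.SpecialLinearGroup.map_apply_coe] <;> decide
lemma rho_matB_mem : rho matB ∈ Hmod4 := by
  refine ⟨?_, ?_, ?_, ?_⟩ <;>
    simp [rho, matB, Matrix.SpecialLinearGroup.map_apply_coe] <;> decide

lemma phi_mem_Hmod4 (z : FreeGroup (Fin 2)) : rho (FreeGroup.lift gens z) ∈ Hmod4 := by
  induction z using FreeGroup.induction_on with
  | C1 => simp only [map_one]; exact Hmod4.one_mem
  | of x =>
    rcases fin2_cases x with rfl | rfl
    · show rho (FreeGroup.lift gens (FreeGroup.of 0)) ∈ Hmod4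
      rw [FreeGroup.lift_apply_of]
      exact rho_matA_mem
    · show rho (FreeGroup.lift gens (FreeGroup.of 1)) ∈ Hmod4
      rw [FreeGroup.lift_apply_of]
      exact rho_matB_mem
  | inv_of x hx => simp only [map_inv]; exact Hmod4.inv_mem hx
  | mul x y hx hy => simp only [map_mul]; exact Hmod4.mul_mem hx hy

lemma phi_ne_neg_one (z : FreeGroup (Fin 2)) : FreeGroup.lift gens z ≠ -1 := by
  intro h
  have hm := phi_mem_Hmod4 z
  rw [h] at hm
  have h00 : ((-1 : SL2Z4)).1 0 0 = 1 := by
    have : rho (-1 : SL2Z) = (-1 : SL2Z4) := by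
      ext i j
      fin_cases i <;> fin_cases j <;>
        simp [rho, Matrix.SpecialLinearGroup.map_apply_coe]
    rw [← this]
    exact (by
      have := hm.1
      simpa [this] using this)
  revert h00
  decide

noncomputable def psi : FreeGroup (Fin 2) →* PSL2Z := projSL.comp (FreeGroup.lift gens)

lemma psi_injective : Function.Injective psi := by
  intro x y h
  have hq : (FreeGroup.lift gens x)⁻¹ * FreeGroup.lift gens y ∈ Subgroup.center SL2Z := by
    rw [← QuotientGroup.eq]
    exact h
  obtain ⟨r, hr2, hr⟩ := Matrix.SpecialLinearGroup.mem_center_iff.mp hq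
  have hcard : Fintype.card (Fin 2) = 2 := by simp
  rw [hcard] at hr2
  have hr' : r * r = 1 := by rw [← sq]; exact hr2
  rcases (Int.mul_eq_one_iff_eq_one_or_neg_one.mp hr') with ⟨rfl, -⟩ | ⟨rfl, -⟩
  · -- r = 1
    have h1 : (FreeGroup.lift gens x)⁻¹ * FreeGroup.lift gens y = 1 := by
      apply Subtype.ext
      rw [← hr]
      simp
    exact phi_injective (inv_mul_eq_one.mp h1)
  · -- r = -1 : contradiction
    exfalso
    have h1 : (FreeGroup.lift gens x)⁻¹ * FreeGroup.lift gens y = -1 := by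
      apply Subtype.ext
      rw [← hr]
      ext i j
      fin_cases i <;> fin_cases j <;> simp
    have := phi_ne_neg_one (x⁻¹ * y)
    rw [map_mul, map_inv] at this
    exact this h1

def pa : Equiv.Perm (Fin 6) :=
  ⟨![1, 2, 0, 4, 5, 3], ![2, 0, 1, 5, 3, 4], by decide, by decide⟩

def pb : Equiv.Perm (Fin 6) :=
  ⟨![3, 5, 1, 2, 0, 4], ![4, 2, 3, 0, 5, 1], by decide, by decide⟩

def piPerm : FreeGroup (Fin 2) →* Equiv.Perm (Fin 6) := FreeGroup.lift ![pa, pb]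

def wa : FreeGroup (Fin 2) := FreeGroup.of 0
def wb : FreeGroup (Fin 2) := FreeGroup.of 1

def Sw : Set (FreeGroup (Fin 2)) :=
  {wb ^ 6, wb⁻¹ * wa ^ 3 * wb, wa ^ 3, wb ^ 2 * wa⁻¹ * wb, wb * wa * wb, wa * wb ^ 2,
    wb ^ 3 * wa}

def wg : FreeGroup (Fin 2) := wb * wa * wb ^ 3 * wa⁻¹ * wb⁻¹ ^ 4

lemma piPerm_wa : piPerm wa = pa := by
  simp [piPerm, wa, FreeGroup.lift_apply_of]

lemma piPerm_wb : piPerm wb = pb := by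
  simp [piPerm, wb, FreeGroup.lift_apply_of]

lemma wg_not_mem : wg ∉ Subgroup.closure Sw := by
  intro hmem
  have hle : Subgroup.closure Sw ≤
      (MulAction.stabilizer (Equiv.Perm (Fin 6)) (0 : Fin 6)).comap piPerm := by
    rw [Subgroup.closure_le]
    rintro s hs
    simp only [Sw, Set.mem_insert_iff, Set.mem_singleton_iff] at hs
    rcases hs with rfl | rfl | rfl | rfl | rfl | rfl | rfl <;>
      · show piPerm _ ∈ MulAction.stabilizer _ _
        rw [MulAction.mem_stabilizer_iff]
        simp only [map_mul, map_pow, map_inv, piPerm_wa, piPerm_wb]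
        decide
  have h0 := hle hmem
  rw [Subgroup.mem_comap, MulAction.mem_stabilizer_iff] at h0
  rw [show piPerm wg = pb * pa * pb ^ 3 * pa⁻¹ * pb⁻¹ ^ 4 by
    simp only [wg, map_mul, map_pow, map_inv, piPerm_wa, piPerm_wb]] at h0
  revert h0
  decide

open IrrSlope in
lemma gSL_coe : ((matB * matA * matB ^ 3 * matA⁻¹ * matB⁻¹ ^ 4 : SL2Z) : Matrix (Fin 2) (Fin 2) ℤ)
    = !![205, -24; 504, -59] := by
  rw [matA_inv, matB_inv]
  decide

lemma gSL_mem_Gamma12 : (matB * matA * matB ^ 3 * matA⁻¹ * matB⁻¹ ^ 4 : SL2Z) ∈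
    CongruenceSubgroup.Gamma 12 := by
  rw [CongruenceSubgroup.Gamma_mem]
  refine ⟨?_, ?_, ?_, ?_⟩ <;>
    · show ((_ : ℤ) : ZMod 12) = _
      rw [show ((matB * matA * matB ^ 3 * matA⁻¹ * matB⁻¹ ^ 4 : SL2Z) : Matrix (Fin 2) (Fin 2) ℤ)
        = !![205, -24; 504, -59] from gSL_coe]
      decide

lemma psi_wa : psi wa = Abar := by
  simp only [psi, wa, MonoidHom.comp_apply, FreeGroup.lift_apply_of]
  rfl

lemma psi_wb : psi wb = Bbar := by
  simp only [psi, wb, MonoidHom.comp_apply, FreeGroup.lift_apply_of]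
  rfl

theorem genus_two_level_twelve_noncongruence' :
    Bbar * Abar * Bbar ^ 3 * Abar⁻¹ * Bbar⁻¹ ^ 4 ∈ GammaBar 12 ∧
    Bbar * Abar * Bbar ^ 3 * Abar⁻¹ * Bbar⁻¹ ^ 4 ∉
      Subgroup.closure ({Bbar ^ 6, Bbar⁻¹ * Abar ^ 3 * Bbar, Abar ^ 3,
        Bbar ^ 2 * Abar⁻¹ * Bbar, Bbar * Abar * Bbar, Abar * Bbar ^ 2,
        Bbar ^ 3 * Abar} : Set PSL2Z) ∧
    ¬ GammaBar 12 ≤ Subgroup.closure ({Bbar ^ 6, Bbar⁻¹ * Abar ^ 3 * Bbar, Abar ^ 3,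
        Bbar ^ 2 * Abar⁻¹ * Bbar, Bbar * Abar * Bbar, Abar * Bbar ^ 2,
        Bbar ^ 3 * Abar} : Set PSL2Z) := by
  have hproj : projSL (matB * matA * matB ^ 3 * matA⁻¹ * matB⁻¹ ^ 4 : SL2Z) =
      Bbar * Abar * Bbar ^ 3 * Abar⁻¹ * Bbar⁻¹ ^ 4 := by
    simp only [map_mul, map_pow, map_inv, Abar, Bbar]
  have hpsi_wg : psi wg = Bbar * Abar * Bbar ^ 3 * Abar⁻¹ * Bbar⁻¹ ^ 4 := by
    simp only [wg, map_mul, map_pow, map_inv, psi_wa, psi_wb]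
  have hS : ({Bbar ^ 6, Bbar⁻¹ * Abar ^ 3 * Bbar, Abar ^ 3,
        Bbar ^ 2 * Abar⁻¹ * Bbar, Bbar * Abar * Bbar, Abar * Bbar ^ 2,
        Bbar ^ 3 * Abar} : Set PSL2Z) = psi '' Sw := by
    simp only [Sw, Set.image_insert_eq, Set.image_singleton, map_mul, map_pow, map_inv,
      psi_wa, psi_wb]
  have part1 : Bbar * Abar * Bbar ^ 3 * Abar⁻¹ * Bbar⁻¹ ^ 4 ∈ GammaBar 12 := by
    exact ⟨_, gSL_mem_Gamma12, hproj⟩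
  have part2 : Bbar * Abar * Bbar ^ 3 * Abar⁻¹ * Bbar⁻¹ ^ 4 ∉
      Subgroup.closure ({Bbar ^ 6, Bbar⁻¹ * Abar ^ 3 * Bbar, Abar ^ 3,
        Bbar ^ 2 * Abar⁻¹ * Bbar, Bbar * Abar * Bbar, Abar * Bbar ^ 2,
        Bbar ^ 3 * Abar} : Set PSL2Z) := by
    rw [hS, ← MonoidHom.map_closure]
    intro hmem
    obtain ⟨x, hx, hxe⟩ := Subgroup.mem_map.mp hmem
    have hxg : x = wg := psi_injective (hxe.trans hpsi_wg.symm)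
    exact wg_not_mem (hxg ▸ hx)
  exact ⟨part1, part2, fun hle => part2 (hle part1)⟩


/-- For the genus-2 level-12 group `Γ = ⟨B⁶, B⁻¹A³B, A³, B²A⁻¹B, BAB, AB², B³A⟩`, the image
of `BAB³A⁻¹B⁻⁴` lies in `Γ̄(12)` but not in `Γ`; in particular `Γ̄(12) ⊄ Γ`. -/
theorem genus_two_level_twelve_noncongruence :
    Bbar * Abar * Bbar ^ 3 * Abar⁻¹ * Bbar⁻¹ ^ 4 ∈ GammaBar 12 ∧
    Bbar * Abar * Bbar ^ 3 * Abar⁻¹ * Bbar⁻¹ ^ 4 ∉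
      Subgroup.closure ({Bbar ^ 6, Bbar⁻¹ * Abar ^ 3 * Bbar, Abar ^ 3,
        Bbar ^ 2 * Abar⁻¹ * Bbar, Bbar * Abar * Bbar, Abar * Bbar ^ 2,
        Bbar ^ 3 * Abar} : Set PSL2Z) ∧
    ¬ GammaBar 12 ≤ Subgroup.closure ({Bbar ^ 6, Bbar⁻¹ * Abar ^ 3 * Bbar, Abar ^ 3,
        Bbar ^ 2 * Abar⁻¹ * Bbar, Bbar * Abar * Bbar, Abar * Bbar ^ 2,
        Bbar ^ 3 * Abar} : Set PSL2Z) :=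
  genus_two_level_twelve_noncongruence'
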